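/- Let π be a plane partition with at most b rows and entries at most c, let λ = sh(π) with parts λ_1 ≥ λ_2 ≥ ⋯ (λ_k = 0 if the k-th row is empty), and let D = Φ(π) = (d_{iℓ}) viewed as a b×c matrix. Then for every k ∈ [1,b], λ_k = max over monotone paths Π from (k,1) to (b,c) of ∑_{(i,ℓ)∈Π} d_{iℓ}. -/

import Mathlib

open scoped BigOperators

/-- A plane partition: a matrix of naturals (0-indexed) with weakly decreasing rows and
columns and finitely many nonzero entries. -/
structure PlanePartition where
  entry : ℕ → ℕ → ℕ
  row_decr : ∀ i j, entry i (j + 1) ≤ entry i j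
  col_decr : ∀ i j, entry (i + 1) j ≤ entry i j
  finite_support : {p : ℕ × ℕ | entry p.1 p.2 ≠ 0}.Finite

namespace PlanePartition

/-- `π` has at most `b` (nonzero) rows. -/
def rowsLE (π : PlanePartition) (b : ℕ) : Prop := ∀ i j, b ≤ i → π.entry i j = 0

/-- `π` has at most `a` (nonzero) columns. -/
def colsLE (π : PlanePartition) (a : ℕ) : Prop := ∀ i j, a ≤ j → π.entry i j = 0

/-- all entries of `π` are at most `c`. -/
def entriesLE (π : PlanePartition) (c : ℕ) : Prop := ∀ i j, π.entry i j ≤ c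

/-- the number of columns of `π` containing the entry `ℓ`. -/
noncomputable def cCol (π : PlanePartition) (ℓ : ℕ) : ℕ :=
  {j | ∃ i, π.entry i j = ℓ}.ncard

/-- the length of the `i`-th row of `π` (0-indexed); this is the `(i+1)`-st part of
the shape of `π`. -/
noncomputable def rowLen (π : PlanePartition) (i : ℕ) : ℕ :=
  {j | 0 < π.entry i j}.ncard

/-- `d_{iℓ} = #{j : π_{ij} = ℓ > π_{i+1,j}}`; the row index `i` is 0-indexed
while `ℓ` denotes the actual value. -/
noncomputable def phi (π : PlanePartition) (i ℓ : ℕ) : ℕ :=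
  {j | π.entry i j = ℓ ∧ π.entry (i + 1) j < ℓ}.ncard

/-- `Φ(π)` as a 0-indexed matrix: entry `(i, l)` counts `j` with `π_{ij} = l+1 > π_{i+1,j}`. -/
noncomputable def phiMatrix (π : PlanePartition) : ℕ → ℕ → ℕ :=
  fun i l => π.phi i (l + 1)

/-- `π` has shape `μ`. -/
def hasShape (π : PlanePartition) (μ : YoungDiagram) : Prop :=
  ∀ i j, 0 < π.entry i j ↔ (i, j) ∈ μ

/-- the descent set of `π` (0-indexed positions). -/
def des (π : PlanePartition) : Set (ℕ × ℕ) :=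
  {p | π.entry (p.1 + 1) p.2 < π.entry p.1 p.2}

end PlanePartition

/-- the set of plane partitions with at most `a` columns, at most `b` rows
and entries at most `c`. -/
def PP (a b c : ℕ) : Set PlanePartition :=
  {π | π.colsLE a ∧ π.rowsLE b ∧ π.entriesLE c}

/-- `PP(∞, b, c)`: plane partitions with at most `b` rows and entries at most `c`. -/
def PPinf (b c : ℕ) : Set PlanePartition :=
  {π | π.rowsLE b ∧ π.entriesLE c}

/-- a monotone lattice path (as a list of points) from `s` to `t`. -/
def IsMonPath (L : List (ℕ × ℕ)) (s t : ℕ × ℕ) : Prop :=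
  L.head? = some s ∧ L.getLast? = some t ∧
    L.Chain' fun p q => q = (p.1 + 1, p.2) ∨ q = (p.1, p.2 + 1)

/-- the last passage time: the maximal weight of a monotone path from `s` to `t`
in the matrix `d`. -/
noncomputable def lastPassage (d : ℕ → ℕ → ℕ) (s t : ℕ × ℕ) : ℕ :=
  sSup {n | ∃ L, IsMonPath L s t ∧ n = (L.map fun p => d p.1 p.2).sum}

/-- `b×c` matrices of naturals (as functions vanishing off `[0,b) × [0,c)`) whose
last passage time `G(b,c)` is at most `a`. -/
def BM (a b c : ℕ) : Set (ℕ → ℕ → ℕ) :=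
  {d | (∀ i j, b ≤ i → d i j = 0) ∧ (∀ i j, c ≤ j → d i j = 0) ∧
    lastPassage d (0, 0) (b - 1, c - 1) ≤ a}

/-- the rectangular Young diagram of the partition `(a^b)` (with `b` rows of length `a`). -/
def rectDiagram (a b : ℕ) : YoungDiagram where
  cells := Finset.range b ×ˢ Finset.range a
  isLowerSet := by
    intro p q hle hp
    simp only [Finset.coe_product, Set.mem_prod, Finset.mem_coe, Finset.mem_range] at hp ⊢
    exact ⟨lt_of_le_of_lt hle.1 hp.1, lt_of_le_of_lt hle.2 hp.2⟩

/-- the variables `(1^b, x_1, x_2, …)`: the first `b` variables are specialized to `1`. -/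
def oneExtend (b : ℕ) (x : ℕ → ℝ) : ℕ → ℝ :=
  fun i => if i < b then 1 else x (i - b)

/-- the Schur polynomial `s_μ(x_1, …, x_N)` evaluated at real arguments;
variables are 0-indexed (`x ℓ` is the variable `x_{ℓ+1}`), as are tableau entries. -/
noncomputable def schur (μ : YoungDiagram) (N : ℕ) (x : ℕ → ℝ) : ℝ :=
  ∑ᶠ T ∈ {T : SemistandardYoungTableau μ | ∀ i j, (i, j) ∈ μ → T i j < N},
    ∏ p ∈ μ.cells, x (T p.1 p.2)

/-- the dual symmetric Grothendieck polynomial `g_μ(x_1, …, x_n)` evaluated at real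
arguments; variables are 0-indexed (`x ℓ` is the variable `x_{ℓ+1}`). -/
noncomputable def grothG (μ : YoungDiagram) (n : ℕ) (x : ℕ → ℝ) : ℝ :=
  ∑ᶠ π ∈ {π : PlanePartition | π.hasShape μ ∧ π.entriesLE n},
    ∏ ℓ ∈ Finset.range n, x ℓ ^ π.cCol (ℓ + 1)

/-- the elementary symmetric polynomial `e_m(x_1, …, x_n)` evaluated at real arguments. -/
noncomputable def esym (n : ℕ) (x : ℕ → ℝ) (m : ℕ) : ℝ :=
  ∑ S ∈ (Finset.range n).powersetCard m, ∏ i ∈ S, x i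

/-- `e_m` for an integer index `m`, with `e_m = 0` for `m < 0`. -/
noncomputable def esymZ (n : ℕ) (x : ℕ → ℝ) (m : ℤ) : ℝ :=
  if 0 ≤ m then esym n x m.toNat else 0

/-- the weight `∏_{(i,j) ∈ Des(π)} q_{π_{ij}}`; the parameters are 0-indexed
(`q ℓ` is the parameter `q_{ℓ+1}`). -/
noncomputable def desWeight (π : PlanePartition) (q : ℕ → ℝ) : ℝ :=
  ∏ᶠ p ∈ π.des, q (π.entry p.1 p.2 - 1)

/-- the probability of a configuration `w` of a `b×c` matrix of i.i.d. Geom(q) entries,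
where `P(entry = k) = (1-q) qᵏ`. -/
noncomputable def geomWeight (q : ℝ) (b c : ℕ) (w : Fin b × Fin c → ℕ) : ℝ :=
  ∏ p : Fin b × Fin c, ((1 - q) * q ^ w p)

/-- extend a `b×c` matrix to an `ℕ × ℕ`-indexed matrix by zero. -/
def matExt {b c : ℕ} (w : Fin b × Fin c → ℕ) : ℕ → ℕ → ℕ :=
  fun i j => if h : i < b ∧ j < c then w (⟨i, h.1⟩, ⟨j, h.2⟩) else 0


namespace LPPAux

variable (π : PlanePartition)

lemma entry_anti_row (i : ℕ) : Antitone (π.entry i) :=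
  antitone_nat_of_succ_le (π.row_decr i)

lemma drop_nonempty (i l : ℕ) : {j | π.entry i j ≤ l}.Nonempty := by
  have hfin : {j | π.entry i j ≠ 0}.Finite := by
    apply (π.finite_support.image Prod.snd).subset
    intro j hj
    exact ⟨(i, j), hj, rfl⟩
  obtain ⟨j, hj⟩ := hfin.infinite_compl.nonempty
  simp only [Set.mem_compl_iff, Set.mem_setOf_eq, not_not] at hj
  exact ⟨j, by simp [hj]⟩

/-- the first column where row `i` drops to a value `≤ l`. -/
noncomputable def F (i l : ℕ) : ℕ := sInf {j | π.entry i j ≤ l}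

lemma lt_F_iff (i l j : ℕ) : j < F π i l ↔ l + 1 ≤ π.entry i j := by
  constructor
  · intro h
    have h2 := Nat.notMem_of_lt_sInf h
    simp only [Set.mem_setOf_eq, not_le] at h2
    omega
  · intro h
    by_contra hc
    push_neg at hc
    have h1 : π.entry i j ≤ π.entry i (F π i l) := entry_anti_row π i hc
    have h2 : π.entry i (F π i l) ≤ l := Nat.sInf_mem (drop_nonempty π i l)
    omega

lemma F_row_mono (i l : ℕ) : F π (i + 1) l ≤ F π i l := by
  rcases Nat.eq_zero_or_pos (F π (i + 1) l) with h0 | h0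
  · omega
  · have h := (lt_F_iff π (i + 1) l (F π (i + 1) l - 1)).mp (by omega)
    have h2 : π.entry (i + 1) (F π (i + 1) l - 1) ≤ π.entry i (F π (i + 1) l - 1) :=
      π.col_decr i _
    have h3 := (lt_F_iff π i l (F π (i + 1) l - 1)).mpr (by omega)
    omega

lemma F_col_mono (i l : ℕ) : F π i (l + 1) ≤ F π i l := by
  rcases Nat.eq_zero_or_pos (F π i (l + 1)) with h0 | h0
  · omega
  · have h := (lt_F_iff π i (l + 1) (F π i (l + 1) - 1)).mp (by omega)
    have h3 := (lt_F_iff π i l (F π i (l + 1) - 1)).mpr (by omega)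
    omega

lemma F_row_zero {b : ℕ} (hrows : π.rowsLE b) {i : ℕ} (h : b ≤ i) (l : ℕ) :
    F π i l = 0 :=
  Nat.sInf_eq_zero.mpr (Or.inl (by simp [Set.mem_setOf_eq, hrows i 0 h]))

lemma F_col_zero {c : ℕ} (hent : π.entriesLE c) {l : ℕ} (h : c ≤ l) (i : ℕ) :
    F π i l = 0 :=
  Nat.sInf_eq_zero.mpr (Or.inl (by
    simp only [Set.mem_setOf_eq]
    exact le_trans (hent i 0) h))

lemma phiMatrix_eq (i l : ℕ) :
    π.phiMatrix i l = F π i l - max (F π (i + 1) l) (F π i (l + 1)) := by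
  have hset : {j | π.entry i j = l + 1 ∧ π.entry (i + 1) j < l + 1}
      = Set.Ico (max (F π (i + 1) l) (F π i (l + 1))) (F π i l) := by
    ext j
    have h1 := lt_F_iff π i l j
    have h2 := lt_F_iff π i (l + 1) j
    have h3 := lt_F_iff π (i + 1) l j
    simp only [Set.mem_setOf_eq, Set.mem_Ico]
    omega
  show ({j | π.entry i j = l + 1 ∧ π.entry (i + 1) j < l + 1}).ncard = _
  rw [hset, ← Finset.coe_Ico, Set.ncard_coe_finset, Nat.card_Ico]

/-- upper bound: any monotone-path sum of `Φ(π)` starting at `p` is at most `F p.1 p.2`. -/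
lemma sum_le_F (L : List (ℕ × ℕ))
    (hch : L.Chain' fun p q => q = (p.1 + 1, p.2) ∨ q = (p.1, p.2 + 1)) :
    ∀ p, L.head? = some p →
      (L.map fun r => π.phiMatrix r.1 r.2).sum ≤ F π p.1 p.2 := by
  induction L with
  | nil => intro p hp; simp at hp
  | cons q L ih =>
    intro p hp
    simp only [List.head?_cons, Option.some.injEq] at hp
    subst hp
    cases L with
    | nil =>
      simp only [List.map_cons, List.map_nil, List.sum_cons, List.sum_nil, add_zero]
      rw [phiMatrix_eq]
      exact Nat.sub_le _ _
    | cons q' L' =>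
      simp only [List.Chain', List.isChain_cons_cons] at hch
      have hrec := ih hch.2 q' (by simp)
      have hq : F π q'.1 q'.2 ≤ max (F π (q.1 + 1) q.2) (F π q.1 (q.2 + 1)) := by
        rcases hch.1 with h | h <;> subst h
        · exact le_max_left _ _
        · exact le_max_right _ _
      have hmax1 : F π (q.1 + 1) q.2 ≤ F π q.1 q.2 := F_row_mono π _ _
      have hmax2 : F π q.1 (q.2 + 1) ≤ F π q.1 q.2 := F_col_mono π _ _
      have hphi := phiMatrix_eq π q.1 q.2
      simp only [List.map_cons, List.sum_cons] at hrec ⊢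
      omega

/-- the greedy maximal path from `(i, l)` to `(b-1, c-1)`. -/
noncomputable def goodPath (b c : ℕ) (i l : ℕ) : List (ℕ × ℕ) :=
  if h1 : i + 1 ≤ b - 1 ∧ (c - 1 ≤ l ∨ F π i (l + 1) ≤ F π (i + 1) l) then
    (i, l) :: goodPath b c (i + 1) l
  else if h2 : l + 1 ≤ c - 1 then
    (i, l) :: goodPath b c i (l + 1)
  else [(i, l)]
termination_by b - 1 - i + (c - 1 - l)
decreasing_by all_goals omega

lemma goodPath_spec {b c : ℕ} (hb : 0 < b) (hc : 0 < c)
    (hrows : π.rowsLE b) (hent : π.entriesLE c) :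
    ∀ m i l, b - 1 - i + (c - 1 - l) ≤ m → i ≤ b - 1 → l ≤ c - 1 →
      (goodPath π b c i l).head? = some (i, l) ∧
      (goodPath π b c i l).getLast? = some (b - 1, c - 1) ∧
      (goodPath π b c i l).Chain' (fun p q => q = (p.1 + 1, p.2) ∨ q = (p.1, p.2 + 1)) ∧
      ((goodPath π b c i l).map fun r => π.phiMatrix r.1 r.2).sum = F π i l := by
  intro m
  induction m using Nat.strong_induction_on with
  | _ m ih =>
    intro i l hm hi hl
    rw [goodPath]
    by_cases h1 : i + 1 ≤ b - 1 ∧ (c - 1 ≤ l ∨ F π i (l + 1) ≤ F π (i + 1) l)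
    · rw [dif_pos h1]
      obtain ⟨hh, hlast, hch, hsum⟩ :=
        ih (b - 1 - (i + 1) + (c - 1 - l)) (by omega) (i + 1) l le_rfl h1.1 hl
      have hsum2 : π.phiMatrix i l + F π (i + 1) l = F π i l := by
        have hphi := phiMatrix_eq π i l
        have hcl : F π i (l + 1) ≤ F π (i + 1) l := by
          rcases h1.2 with h | h
          · have : F π i (l + 1) = 0 := F_col_zero π hent (by omega) i
            omega
          · exact h
        have hr := F_row_mono π i l
        omega
      cases hE : goodPath π b c (i + 1) l with
      | nil => rw [hE] at hh; simp at hh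
      | cons q L =>
        rw [hE] at hh hlast hch hsum
        simp only [List.head?_cons, Option.some.injEq] at hh
        refine ⟨rfl, ?_, ?_, ?_⟩
        · rw [List.getLast?_cons_cons]; exact hlast
        · simp only [List.Chain', List.isChain_cons_cons]
          exact ⟨Or.inl (by rw [hh]), hch⟩
        · simp only [List.map_cons, List.sum_cons] at hsum ⊢
          omega
    · rw [dif_neg h1]
      by_cases h2 : l + 1 ≤ c - 1
      · rw [dif_pos h2]
        obtain ⟨hh, hlast, hch, hsum⟩ :=
          ih (b - 1 - i + (c - 1 - (l + 1))) (by omega) i (l + 1) le_rfl hi h2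
        have hsum2 : π.phiMatrix i l + F π i (l + 1) = F π i l := by
          have hphi := phiMatrix_eq π i l
          have hcl : F π (i + 1) l ≤ F π i (l + 1) := by
            by_cases hib : b ≤ i + 1
            · rw [F_row_zero π hrows hib l]; exact Nat.zero_le _
            · by_contra hcon
              push_neg at hcon
              exact h1 ⟨by omega, Or.inr (by omega)⟩
          have hr := F_col_mono π i l
          omega
        cases hE : goodPath π b c i (l + 1) with
        | nil => rw [hE] at hh; simp at hh
        | cons q L =>
          rw [hE] at hh hlast hch hsum
          simp only [List.head?_cons, Option.some.injEq] at hh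
          refine ⟨rfl, ?_, ?_, ?_⟩
          · rw [List.getLast?_cons_cons]; exact hlast
          · simp only [List.Chain', List.isChain_cons_cons]
            exact ⟨Or.inr (by rw [hh]), hch⟩
          · simp only [List.map_cons, List.sum_cons] at hsum ⊢
            omega
      · rw [dif_neg h2]
        have hl' : l = c - 1 := by omega
        have hi' : i = b - 1 := by
          by_contra hcon
          exact h1 ⟨by omega, Or.inl (by omega)⟩
        refine ⟨rfl, by rw [hi', hl']; simp, List.isChain_singleton _, ?_⟩
        have hphi := phiMatrix_eq π i l
        have hz1 : F π (i + 1) l = 0 := F_row_zero π hrows (by omega) l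
        have hz2 : F π i (l + 1) = 0 := F_col_zero π hent (by omega) i
        simp only [List.map_cons, List.map_nil, List.sum_cons, List.sum_nil, add_zero]
        omega

end LPPAux

/-- for a plane partition `π` with at most `b` rows and entries at most `c`,
the `k`-th part of the shape of `π` equals the last passage time of `Φ(π)` from `(k,1)`
to `(b,c)` (stated here with 0-indexed rows/columns of the matrix `Φ(π)`). -/
theorem shape_part_eq_lastPassage (b c : ℕ) (hb : 0 < b) (hc : 0 < c)
    (π : PlanePartition) (hrows : π.rowsLE b) (hent : π.entriesLE c)
    (k : ℕ) (hk1 : 1 ≤ k) (hkb : k ≤ b) :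
    π.rowLen (k - 1) = lastPassage π.phiMatrix (k - 1, 0) (b - 1, c - 1) := by
  open LPPAux in
  have hlen : π.rowLen (k - 1) = F π (k - 1) 0 := by
    unfold PlanePartition.rowLen
    have hs : {j | 0 < π.entry (k - 1) j} = Set.Iio (F π (k - 1) 0) := by
      ext j
      simp only [Set.mem_setOf_eq, Set.mem_Iio]
      rw [lt_F_iff]
      omega
    rw [hs, ← Finset.coe_Iio, Set.ncard_coe_finset, Nat.card_Iio]
  obtain ⟨hh, hlast, hch, hsum⟩ :=
    goodPath_spec π hb hc hrows hent (b - 1 - (k - 1) + (c - 1 - 0)) (k - 1) 0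
      le_rfl (by omega) (by omega)
  have hmem : F π (k - 1) 0 ∈
      {n | ∃ L, IsMonPath L (k - 1, 0) (b - 1, c - 1) ∧
        n = (L.map fun p => π.phiMatrix p.1 p.2).sum} :=
    ⟨goodPath π b c (k - 1) 0, ⟨hh, hlast, hch⟩, hsum.symm⟩
  have hub : ∀ n ∈ {n | ∃ L, IsMonPath L (k - 1, 0) (b - 1, c - 1) ∧
      n = (L.map fun p => π.phiMatrix p.1 p.2).sum}, n ≤ F π (k - 1) 0 := by
    rintro n ⟨L, ⟨hL1, hL2, hL3⟩, rfl⟩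
    exact sum_le_F π L hL3 _ hL1
  rw [hlen]
  unfold lastPassage
  exact le_antisymm (le_csSup ⟨F π (k - 1) 0, hub⟩ hmem) (csSup_le ⟨_, hmem⟩ hub)
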